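/- Let Γ ⊂ ℝⁿ be a regular sampling set with Γ-tile W, let ψ ∈ 𝓢(ℝⁿ), and let (c_γ)_{γ∈Γ} be a bounded family of complex numbers; set h = ∑_{γ∈Γ} c_γ 𝟙_{γ+W}. Then for every y ∈ ℝⁿ the series ∑_{γ∈Γ} |W| c_γ ψ(y−γ) converges absolutely and | ∑_{γ∈Γ} |W| c_γ ψ(y−γ) − (h * ψ)(y) | ≤ (|h| * Ω_W ψ)(y), where Ω_W ψ(z) = sup_{w∈W} |ψ(z+w) − ψ(z)| and |W| is the Lebesgue measure of W. -/

import Mathlib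

open MeasureTheory
open scoped ENNReal

/-- Convolution `(f * g)(x) = ∫ f(y) g(x − y) dy` on `ℝⁿ`. -/
noncomputable def conv (n : ℕ) (f g : EuclideanSpace ℝ (Fin n) → ℂ) :
    EuclideanSpace ℝ (Fin n) → ℂ :=
  fun x => ∫ y, f y * g (x - y)

/-- `Γ` is a regular sampling set of `ℝⁿ` with `Γ`-tile `W`: `Γ` is countable, `W` is a
relatively compact (= bounded) Borel neighborhood of `0`, the translates `γ + W` cover
`ℝⁿ` up to a null set, and any two distinct translates overlap in a null set. -/
def IsRegSampling (n : ℕ) (Γ W : Set (EuclideanSpace ℝ (Fin n))) : Prop :=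
  Γ.Countable ∧ MeasurableSet W ∧ W ∈ nhds (0 : EuclideanSpace ℝ (Fin n)) ∧
    Bornology.IsBounded W ∧
    volume ((Set.univ : Set (EuclideanSpace ℝ (Fin n))) \ ⋃ γ ∈ Γ, (γ + ·) '' W) = 0 ∧
    Γ.Pairwise fun γ γ' => volume (((γ + ·) '' W) ∩ ((γ' + ·) '' W)) = 0

/-- The step function `h = ∑_{γ∈Γ} c_γ 𝟙_{γ+W}`. -/
noncomputable def tileFn (n : ℕ) (Γ W : Set (EuclideanSpace ℝ (Fin n)))
    (c : Γ → ℂ) : EuclideanSpace ℝ (Fin n) → ℂ :=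
  fun x => ∑' γ : Γ, Set.indicator (((γ : EuclideanSpace ℝ (Fin n)) + ·) '' W) (fun _ => c γ) x

section Helpers

theorem lint_sub_left {n : ℕ} (y : EuclideanSpace ℝ (Fin n))
    (f : EuclideanSpace ℝ (Fin n) → ℝ≥0∞) : ∫⁻ z, f (y - z) = ∫⁻ z, f z := by
  have h := Measure.measurePreserving_sub_left (volume : Measure (EuclideanSpace ℝ (Fin n))) y
  calc ∫⁻ z, f (y - z) = ∫⁻ z, f (MeasurableEquiv.subLeft y z) := rfl
    _ = ∫⁻ z, f z ∂(Measure.map (MeasurableEquiv.subLeft y) volume) :=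
        (lintegral_map_equiv f (MeasurableEquiv.subLeft y)).symm
    _ = ∫⁻ z, f z := by
        rw [show (⇑(MeasurableEquiv.subLeft y)) = (fun t => y - t) from rfl, h.map_eq]

theorem meas_tsum_indicator {α : Type*} [MeasurableSpace α] {ι : Type*} [Countable ι]
    {U : ι → Set α} (hU : ∀ i, MeasurableSet (U i))
    (hd : Pairwise (Function.onFun Disjoint U)) (c : ι → ℂ) :
    Measurable (fun z => ∑' i, (U i).indicator (fun _ => c i) z) := by
  have hval : ∀ i, ∀ z ∈ U i, (∑' j, (U j).indicator (fun _ => c j) z) = c i := by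
    intro i z hz
    rw [tsum_eq_single i]
    · exact Set.indicator_of_mem hz _
    · intro j hj
      exact Set.indicator_of_notMem (fun hzj => (hd hj).le_bot ⟨hzj, hz⟩) _
  have hval0 : ∀ z, z ∉ (⋃ i, U i) → (∑' j, (U j).indicator (fun _ => c j) z) = 0 := by
    intro z hz
    have : ∀ j, (U j).indicator (fun _ => c j) z = 0 := fun j =>
      Set.indicator_of_notMem (fun h => hz (Set.mem_iUnion.2 ⟨j, h⟩)) _
    simp [this]
  intro s _
  have hpre : (fun z => ∑' i, (U i).indicator (fun _ => c i) z) ⁻¹' s =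
      (⋃ i ∈ {i | c i ∈ s}, U i) ∪ ((⋃ i, U i)ᶜ ∩ {_z : α | (0:ℂ) ∈ s}) := by
    ext z
    by_cases hz : z ∈ ⋃ i, U i
    · obtain ⟨i, hi⟩ := Set.mem_iUnion.1 hz
      simp only [Set.mem_preimage, hval i z hi, Set.mem_union, Set.mem_iUnion, Set.mem_inter_iff,
        Set.mem_compl_iff, Set.mem_setOf_eq]
      constructor
      · intro h; exact Or.inl ⟨i, h, hi⟩
      · rintro (⟨j, hj, hzj⟩ | ⟨hzc, _⟩)
        · rcases eq_or_ne j i with rfl | hne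
          · exact hj
          · exact absurd hi (Set.disjoint_left.1 (hd hne) hzj)
        · exact absurd (Set.mem_iUnion.1 hz) hzc
    · simp only [Set.mem_preimage, hval0 z hz, Set.mem_union, Set.mem_iUnion, Set.mem_inter_iff,
        Set.mem_compl_iff, Set.mem_setOf_eq]
      constructor
      · intro h; exact Or.inr ⟨fun hex => hz (Set.mem_iUnion.2 hex), h⟩
      · rintro (⟨j, _, hzj⟩ | ⟨_, h0⟩)
        · exact absurd (Set.mem_iUnion.2 ⟨j, hzj⟩) hz
        · exact h0
  rw [hpre]
  refine MeasurableSet.union (MeasurableSet.biUnion (Set.to_countable _) fun i _ => hU i) ?_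
  refine (MeasurableSet.iUnion hU).compl.inter ?_
  by_cases h0 : (0:ℂ) ∈ s
  · simp [h0]
  · simp [h0]

end Helpers

/-- Key estimate in the proof of Lemma 6.8 of Führ–Mayeli, Euclidean case: for a regular
sampling set `Γ` with tile `W`, a Schwartz function `ψ` and bounded coefficients
`(c_γ)`, setting `h = ∑_γ c_γ 𝟙_{γ+W}`, for every `y` the series
`∑_γ |W| c_γ ψ(y−γ)` converges absolutely and
`|∑_γ |W| c_γ ψ(y−γ) − (h*ψ)(y)| ≤ (|h| * Ω_W ψ)(y)`,
where `Ω_W ψ(z) = sup_{w∈W} |ψ(z+w) − ψ(z)|`. -/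
theorem riemann_sum_vs_convolution (n : ℕ)
    (Γ W : Set (EuclideanSpace ℝ (Fin n))) (hreg : IsRegSampling n Γ W)
    (ψ : SchwartzMap (EuclideanSpace ℝ (Fin n)) ℂ)
    (c : Γ → ℂ) (M : ℝ) (hc : ∀ γ : Γ, ‖c γ‖ ≤ M) :
    ∀ y : EuclideanSpace ℝ (Fin n),
      (Summable fun γ : Γ =>
        ‖((volume W).toReal : ℂ) * c γ * ψ (y - (γ : EuclideanSpace ℝ (Fin n)))‖) ∧
      ENNReal.ofReal
          ‖(∑' γ : Γ, ((volume W).toReal : ℂ) * c γ *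
              ψ (y - (γ : EuclideanSpace ℝ (Fin n)))) -
            conv n (tileFn n Γ W c) (⇑ψ) y‖ ≤
        ∫⁻ z, (‖tileFn n Γ W c z‖₊ : ℝ≥0∞) *
          ⨆ w ∈ W, (‖ψ ((y - z) + w) - ψ (y - z)‖₊ : ℝ≥0∞) := by
  obtain ⟨hΓc, hWm, hW0, hWb, hcov, hdisj⟩ := hreg
  haveI : Countable ↥Γ := hΓc.to_subtype
  intro y
  set h : EuclideanSpace ℝ (Fin n) → ℂ := tileFn n Γ W c with hh
  -- tiles
  have himg : ∀ v : EuclideanSpace ℝ (Fin n), (v + ·) '' W = (fun x => -v + x) ⁻¹' W := by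
    intro v; ext x
    constructor
    · rintro ⟨w, hw, rfl⟩; simpa [neg_add_cancel_left] using hw
    · intro hx; exact ⟨-v + x, hx, add_neg_cancel_left v x⟩
  set T : ↥Γ → Set (EuclideanSpace ℝ (Fin n)) := fun γ => ((γ : EuclideanSpace ℝ (Fin n)) + ·) '' W with hT
  have hTm : ∀ γ, MeasurableSet (T γ) := by
    intro γ; simp only [hT, himg]
    exact hWm.preimage (measurable_const_add _)
  have hTvol : ∀ γ, volume (T γ) = volume W := by
    intro γ; simp only [hT, himg]
    exact measure_preimage_add volume _ W
  have hTae : ∀ γ, NullMeasurableSet (T γ) volume := fun γ => (hTm γ).nullMeasurableSet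
  have hTdisj : Pairwise (Function.onFun (AEDisjoint volume) T) := by
    intro γ γ' hne
    exact hdisj γ.2 γ'.2 (fun hco => hne (Subtype.ext hco))
  have hTcov : volume ((⋃ γ : ↥Γ, T γ)ᶜ) = 0 := by
    rw [← Set.compl_eq_univ_diff, Set.biUnion_eq_iUnion] at hcov
    exact hcov
  -- null exceptional set
  have hOv : volume (⋃ (γ : ↥Γ) (γ' : ↥Γ) (_ : γ ≠ γ'), T γ ∩ T γ') = 0 :=
    measure_iUnion_null fun γ => measure_iUnion_null fun γ' =>
      measure_iUnion_null fun hne => hTdisj hne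
  set N : Set (EuclideanSpace ℝ (Fin n)) :=
    (⋃ γ, T γ)ᶜ ∪ ⋃ (γ : ↥Γ) (γ' : ↥Γ) (_ : γ ≠ γ'), T γ ∩ T γ' with hN
  have hNnull : volume N = 0 := measure_union_null hTcov hOv
  have hNkey : ∀ z ∉ N, ∃ γ : ↥Γ, z ∈ T γ ∧ (∀ γ', z ∈ T γ' → γ' = γ) ∧ h z = c γ := by
    intro z hz
    have hz1 : z ∈ ⋃ γ, T γ := by
      by_contra hzc; exact hz (Or.inl hzc)
    obtain ⟨γ, hγ⟩ := Set.mem_iUnion.1 hz1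
    have huniq : ∀ γ', z ∈ T γ' → γ' = γ := by
      intro γ' hγ'
      by_contra hne
      exact hz (Or.inr (Set.mem_iUnion.2 ⟨γ', Set.mem_iUnion.2 ⟨γ, Set.mem_iUnion.2 ⟨hne, hγ', hγ⟩⟩⟩))
    refine ⟨γ, hγ, huniq, ?_⟩
    have : h z = ∑' γ' : ↥Γ, Set.indicator (T γ') (fun _ => c γ') z := by
      simp only [hh, tileFn, hT]
    rw [this, tsum_eq_single γ]
    · exact Set.indicator_of_mem hγ _
    · intro γ' hne
      exact Set.indicator_of_notMem (fun hm => hne (huniq γ' hm)) _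
  have hae : ∀ᵐ z : EuclideanSpace ℝ (Fin n), z ∉ N := by
    rw [ae_iff]
    simpa using hNnull
  have hhγ : ∀ γ : ↥Γ, ∀ᵐ z : EuclideanSpace ℝ (Fin n), z ∈ T γ → h z = c γ := by
    intro γ
    filter_upwards [hae] with z hz hzT
    obtain ⟨γ₀, _, hz2, hz3⟩ := hNkey z hz
    rw [hz3, hz2 γ hzT]
  have hhM : ∀ᵐ z : EuclideanSpace ℝ (Fin n), ‖h z‖ ≤ M := by
    filter_upwards [hae] with z hz
    obtain ⟨γ, _, _, hz3⟩ := hNkey z hz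
    rw [hz3]; exact hc γ
  -- measurability of h
  have hmeas : AEStronglyMeasurable h volume := by
    set U : ↥Γ → Set (EuclideanSpace ℝ (Fin n)) :=
      fun γ => T γ \ ⋃ (γ' : ↥Γ) (_ : γ' ≠ γ), T γ' with hU
    have hUm : ∀ γ, MeasurableSet (U γ) := fun γ =>
      (hTm γ).diff (MeasurableSet.iUnion fun γ' => MeasurableSet.iUnion fun _ => hTm γ')
    have hUd : Pairwise (Function.onFun Disjoint U) := by
      intro γ γ' hne
      refine Set.disjoint_left.2 fun z hzγ hzγ' => ?_
      exact hzγ'.2 (Set.mem_iUnion.2 ⟨γ, Set.mem_iUnion.2 ⟨hne, hzγ.1⟩⟩)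
    refine ((meas_tsum_indicator hUm hUd c).aestronglyMeasurable).congr ?_
    filter_upwards [hae] with z hz
    obtain ⟨γ, hz1, hz2, hz3⟩ := hNkey z hz
    rw [hz3]
    have hzU : z ∈ U γ := by
      refine ⟨hz1, fun hm => ?_⟩
      obtain ⟨γ', hm'⟩ := Set.mem_iUnion.1 hm
      obtain ⟨hne, hm''⟩ := Set.mem_iUnion.1 hm'
      exact hne (hz2 γ' hm'')
    rw [tsum_eq_single γ
      (fun γ' hne => Set.indicator_of_notMem (fun hm => hne (hz2 γ' hm.1)) _),
      Set.indicator_of_mem hzU]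
  -- basic finiteness / integrability facts
  obtain ⟨R, hR⟩ : ∃ R, W ⊆ Metric.closedBall 0 R := hWb.subset_closedBall 0
  have hW0' : (0 : EuclideanSpace ℝ (Fin n)) ∈ W := mem_of_mem_nhds hW0
  have hR0 : 0 ≤ R := by simpa using hR hW0'
  have hWfin : volume W ≠ ⊤ :=
    ((measure_mono hR).trans_lt measure_closedBall_lt_top).ne
  have hψy : Integrable (fun z => ψ (y - z)) := ψ.integrable.comp_sub_left y
  have hψycont : Continuous (fun z : EuclideanSpace ℝ (Fin n) => ψ (y - z)) :=
    ψ.continuous.comp (continuous_const.sub continuous_id)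
  have hint : Integrable (fun z => h z * ψ (y - z)) := by
    refine Integrable.mono' (hψy.norm.const_mul M)
      (hmeas.mul hψycont.aestronglyMeasurable) ?_
    filter_upwards [hhM] with z hz
    rw [norm_mul]
    exact mul_le_mul_of_nonneg_right hz (norm_nonneg _)
  -- the sup function Ω
  set Ω : EuclideanSpace ℝ (Fin n) → ℝ≥0∞ :=
    fun x => ⨆ w ∈ W, (‖ψ (x + w) - ψ x‖₊ : ℝ≥0∞) with hΩdef
  have hΩ : ∀ (γ : ↥Γ), ∀ z ∈ T γ,
      (‖ψ (y - (γ : EuclideanSpace ℝ (Fin n))) - ψ (y - z)‖₊ : ℝ≥0∞) ≤ Ω (y - z) := by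
    intro γ z hz
    simp only [hT] at hz
    obtain ⟨w, hw, rfl⟩ := hz
    have hrw : y - (γ : EuclideanSpace ℝ (Fin n)) = (y - ((γ : EuclideanSpace ℝ (Fin n)) + w)) + w := by
      abel
    rw [hrw]
    simp only [hΩdef]
    exact le_biSup
      (fun w' => (‖ψ ((y - ((γ : EuclideanSpace ℝ (Fin n)) + w)) + w') -
        ψ (y - ((γ : EuclideanSpace ℝ (Fin n)) + w))‖₊ : ℝ≥0∞)) hw
  -- pointwise decay bound
  set C₀ : ℝ := 2 ^ (n+1) *
    ((Finset.Iic ((n+1), 0)).sup (fun m => SchwartzMap.seminorm ℝ m.1 m.2) ψ) with hC₀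
  have hC₀0 : 0 ≤ C₀ := by
    apply mul_nonneg (by positivity)
    exact apply_nonneg _ _
  have hψdecay : ∀ x : EuclideanSpace ℝ (Fin n), ‖ψ x‖ * (1 + ‖x‖) ^ (n+1) ≤ C₀ := by
    intro x
    have h1 := SchwartzMap.one_add_le_sup_seminorm_apply (𝕜 := ℝ) (m := ((n+1), 0))
      (k := n+1) (n := 0) le_rfl le_rfl ψ x
    rw [norm_iteratedFDeriv_zero] at h1
    rw [mul_comm]
    exact h1
  set C₁ : ℝ := C₀ * (1 + R) ^ (n+1) with hC₁
  set g : EuclideanSpace ℝ (Fin n) → ℝ :=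
    fun x => C₁ * (1 + ‖x‖) ^ (-((n:ℝ)+1)) with hg
  have hrp : ∀ t : ℝ, 0 < t → t ^ (-((n:ℝ)+1)) = ((t ^ (n+1) : ℝ))⁻¹ := by
    intro t ht
    rw [show -((n:ℝ)+1) = -((n+1 : ℕ) : ℝ) by push_cast; ring,
      Real.rpow_neg ht.le, Real.rpow_natCast]
  have hgint : Integrable g := by
    apply Integrable.const_mul
    apply integrable_one_add_norm
    rw [finrank_euclideanSpace_fin]
    push_cast; linarith
  have hsup_le : ∀ x : EuclideanSpace ℝ (Fin n), ∀ w ∈ W, ‖ψ (x + w)‖ ≤ g x := by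
    intro x w hw
    have hwR : ‖w‖ ≤ R := by simpa using hR hw
    have hx1 : (0:ℝ) < 1 + ‖x‖ := by positivity
    have hxw1 : (0:ℝ) < 1 + ‖x + w‖ := by positivity
    have h2 : (1 + ‖x‖) ≤ (1+R) * (1 + ‖x + w‖) := by
      have hx : ‖x‖ ≤ ‖x + w‖ + ‖w‖ := by
        calc ‖x‖ = ‖(x + w) - w‖ := by congr 1; abel
          _ ≤ ‖x + w‖ + ‖w‖ := norm_sub_le _ _
      nlinarith [norm_nonneg (x + w)]
    have h3 : (1 + ‖x‖) ^ (n+1) ≤ (1+R) ^ (n+1) * (1 + ‖x + w‖) ^ (n+1) := by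
      rw [← mul_pow]
      exact pow_le_pow_left₀ hx1.le h2 _
    have h4 : ‖ψ (x + w)‖ * (1 + ‖x‖) ^ (n+1) ≤ C₁ := by
      calc ‖ψ (x + w)‖ * (1 + ‖x‖) ^ (n+1)
          ≤ ‖ψ (x + w)‖ * ((1+R) ^ (n+1) * (1 + ‖x + w‖) ^ (n+1)) := by
            apply mul_le_mul_of_nonneg_left h3 (norm_nonneg _)
        _ = (‖ψ (x + w)‖ * (1 + ‖x + w‖) ^ (n+1)) * (1+R) ^ (n+1) := by ring
        _ ≤ C₀ * (1+R) ^ (n+1) := by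
            apply mul_le_mul_of_nonneg_right (hψdecay _) (by positivity)
    simp only [hg]
    rw [hrp _ hx1, ← div_eq_mul_inv, le_div_iff₀ (by positivity)]
    exact h4
  have hΩle : ∀ x : EuclideanSpace ℝ (Fin n), Ω x ≤ ENNReal.ofReal (g x + ‖ψ x‖) := by
    intro x
    refine iSup₂_le fun w hw => ?_
    rw [← enorm_eq_nnnorm, ← ofReal_norm]
    apply ENNReal.ofReal_le_ofReal
    calc ‖ψ (x + w) - ψ x‖ ≤ ‖ψ (x + w)‖ + ‖ψ x‖ := norm_sub_le _ _
      _ ≤ g x + ‖ψ x‖ := add_le_add_left (hsup_le x w hw) _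
  have hΩint : ∫⁻ x, Ω x ≠ ⊤ := by
    have hgψ : Integrable (fun x => g x + ‖ψ x‖) := hgint.add ψ.integrable.norm
    refine ne_top_of_le_ne_top hgψ.hasFiniteIntegral.ne ?_
    refine (lintegral_mono hΩle).trans (lintegral_mono fun x => ?_)
    exact Real.ofReal_le_enorm _
  have hΩy : ∫⁻ z, Ω (y - z) ≠ ⊤ := by
    rw [lint_sub_left y Ω]; exact hΩint
  have hψlint : ∫⁻ z, (‖ψ (y - z)‖₊ : ℝ≥0∞) ≠ ⊤ := by
    rw [lint_sub_left y (fun x => (‖ψ x‖₊ : ℝ≥0∞))]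
    exact ψ.integrable.hasFiniteIntegral.ne
  -- decomposition of the convolution
  have hUnionAe : (⋃ γ : ↥Γ, T γ) =ᵐ[volume] (Set.univ : Set (EuclideanSpace ℝ (Fin n))) :=
    MeasureTheory.ae_eq_univ.2 hTcov
  have hrest : volume.restrict (⋃ γ : ↥Γ, T γ) = volume := by
    rw [Measure.restrict_congr_set hUnionAe, Measure.restrict_univ]
  have hBsplit : conv n h (⇑ψ) y = ∑' γ : ↥Γ, ∫ z in T γ, c γ * ψ (y - z) := by
    have e1 : conv n h (⇑ψ) y = ∫ z in (⋃ γ : ↥Γ, T γ), h z * ψ (y - z) := by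
      rw [hrest]; rfl
    rw [e1, integral_iUnion_ae hTae hTdisj (by rw [IntegrableOn, hrest]; exact hint)]
    exact tsum_congr fun γ => setIntegral_congr_ae (hTm γ)
      ((hhγ γ).mono fun z hz hzT => by rw [hz hzT])
  -- the Riemann term as an integral over the tile
  have haγ : ∀ γ : ↥Γ, ((volume W).toReal : ℂ) * c γ * ψ (y - (γ : EuclideanSpace ℝ (Fin n))) =
      ∫ _z in T γ, c γ * ψ (y - (γ : EuclideanSpace ℝ (Fin n))) := by
    intro γ
    rw [setIntegral_const, measureReal_def, hTvol γ, Complex.real_smul, mul_assoc]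
  -- per-tile key bound
  have hcconst : ∀ γ : ↥Γ, IntegrableOn
      (fun _z : EuclideanSpace ℝ (Fin n) => c γ * ψ (y - (γ : EuclideanSpace ℝ (Fin n)))) (T γ) := by
    intro γ
    refine integrableOn_const ?_
    rw [hTvol γ]
    exact hWfin
  have hcint : ∀ γ : ↥Γ, IntegrableOn (fun z => c γ * ψ (y - z)) (T γ) := fun γ =>
    (hψy.const_mul _).integrableOn
  have hK : ∀ γ : ↥Γ,
      (‖(((volume W).toReal : ℂ) * c γ * ψ (y - (γ : EuclideanSpace ℝ (Fin n)))) -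
        ∫ z in T γ, c γ * ψ (y - z)‖₊ : ℝ≥0∞) ≤
      ∫⁻ z in T γ, (‖h z‖₊ : ℝ≥0∞) * Ω (y - z) := by
    intro γ
    rw [haγ γ, ← integral_sub (hcconst γ) (hcint γ)]
    refine le_trans (enorm_integral_le_lintegral_enorm _) ?_
    have hstep : ∫⁻ z in T γ, (‖c γ * ψ (y - (γ : EuclideanSpace ℝ (Fin n))) - c γ * ψ (y - z)‖₊ : ℝ≥0∞) ≤
        ∫⁻ z in T γ, (‖c γ‖₊ : ℝ≥0∞) * Ω (y - z) := by
      refine lintegral_mono_ae ?_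
      filter_upwards [ae_restrict_mem (hTm γ)] with z hz
      have e : c γ * ψ (y - (γ : EuclideanSpace ℝ (Fin n))) - c γ * ψ (y - z) =
          c γ * (ψ (y - (γ : EuclideanSpace ℝ (Fin n))) - ψ (y - z)) := by ring
      rw [e, nnnorm_mul, ENNReal.coe_mul]
      exact mul_le_mul_right (hΩ γ z hz) _
    refine hstep.trans (le_of_eq ?_)
    apply lintegral_congr_ae
    filter_upwards [ae_restrict_mem (hTm γ), ae_restrict_of_ae (hhγ γ)] with z hz hz2
    rw [hz2 hz]
  -- pointwise bound for the Riemann terms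
  have hcM : ∀ γ : ↥Γ, (‖c γ‖₊ : ℝ≥0∞) ≤ ENNReal.ofReal M := by
    intro γ
    rw [← enorm_eq_nnnorm, ← ofReal_norm]
    exact ENNReal.ofReal_le_ofReal (hc γ)
  have hA : ∀ γ : ↥Γ, (‖((volume W).toReal : ℂ) * c γ * ψ (y - (γ : EuclideanSpace ℝ (Fin n)))‖₊ : ℝ≥0∞) ≤
      ENNReal.ofReal M * ∫⁻ z in T γ, ((‖ψ (y - z)‖₊ : ℝ≥0∞) + Ω (y - z)) := by
    intro γ
    have hpt : ∀ z ∈ T γ, (‖ψ (y - (γ : EuclideanSpace ℝ (Fin n)))‖₊ : ℝ≥0∞) ≤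
        (‖ψ (y - z)‖₊ : ℝ≥0∞) + Ω (y - z) := by
      intro z hz
      have e : ψ (y - (γ : EuclideanSpace ℝ (Fin n))) =
          ψ (y - z) + (ψ (y - (γ : EuclideanSpace ℝ (Fin n))) - ψ (y - z)) := by ring
      calc (‖ψ (y - (γ : EuclideanSpace ℝ (Fin n)))‖₊ : ℝ≥0∞)
          ≤ (‖ψ (y - z)‖₊ : ℝ≥0∞) + (‖ψ (y - (γ : EuclideanSpace ℝ (Fin n))) - ψ (y - z)‖₊ : ℝ≥0∞) := by
            conv_lhs => rw [e]
            exact_mod_cast nnnorm_add_le (ψ (y - z)) (ψ (y - (γ : EuclideanSpace ℝ (Fin n))) - ψ (y - z))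
        _ ≤ _ := add_le_add_right (hΩ γ z hz) _
    have hnorm : (‖((volume W).toReal : ℂ) * c γ * ψ (y - (γ : EuclideanSpace ℝ (Fin n)))‖₊ : ℝ≥0∞) =
        volume W * ((‖c γ‖₊ : ℝ≥0∞) * (‖ψ (y - (γ : EuclideanSpace ℝ (Fin n)))‖₊ : ℝ≥0∞)) := by
      rw [nnnorm_mul, nnnorm_mul, ENNReal.coe_mul, ENNReal.coe_mul, Complex.nnnorm_real,
        ← enorm_eq_nnnorm (volume W).toReal, Real.enorm_eq_ofReal ENNReal.toReal_nonneg, ENNReal.ofReal_toReal hWfin, mul_assoc]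
    rw [hnorm]
    calc volume W * ((‖c γ‖₊ : ℝ≥0∞) * (‖ψ (y - (γ : EuclideanSpace ℝ (Fin n)))‖₊ : ℝ≥0∞))
        ≤ volume W * (ENNReal.ofReal M * (‖ψ (y - (γ : EuclideanSpace ℝ (Fin n)))‖₊ : ℝ≥0∞)) := by
          exact mul_le_mul_right (mul_le_mul_left (hcM γ) _) _
      _ = ENNReal.ofReal M * (volume (T γ) * (‖ψ (y - (γ : EuclideanSpace ℝ (Fin n)))‖₊ : ℝ≥0∞)) := by
          rw [hTvol γ]; ring
      _ = ENNReal.ofReal M * ∫⁻ _z in T γ, (‖ψ (y - (γ : EuclideanSpace ℝ (Fin n)))‖₊ : ℝ≥0∞) := by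
          rw [setLIntegral_const, mul_comm (volume (T γ))]
      _ ≤ ENNReal.ofReal M * ∫⁻ z in T γ, ((‖ψ (y - z)‖₊ : ℝ≥0∞) + Ω (y - z)) := by
          refine mul_le_mul_right ?_ _
          refine lintegral_mono_ae ?_
          filter_upwards [ae_restrict_mem (hTm γ)] with z hz
          exact hpt z hz
  -- summing the tile integrals
  have htile_sum : ∀ f : EuclideanSpace ℝ (Fin n) → ℝ≥0∞,
      ∑' γ : ↥Γ, ∫⁻ z in T γ, f z ≤ ∫⁻ z, f z := by
    intro f
    rw [← lintegral_iUnion₀ hTae hTdisj]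
    exact lintegral_mono' Measure.restrict_le_self le_rfl
  have hψmeas : Measurable fun z : EuclideanSpace ℝ (Fin n) => (‖ψ (y - z)‖₊ : ℝ≥0∞) :=
    hψycont.measurable.enorm
  have hsplit_fin : ∫⁻ z, ((‖ψ (y - z)‖₊ : ℝ≥0∞) + Ω (y - z)) ≠ ⊤ := by
    rw [lintegral_add_left hψmeas]
    exact ENNReal.add_ne_top.2 ⟨hψlint, hΩy⟩
  -- summability of the Riemann terms
  have hAsum : ∑' γ : ↥Γ,
      (‖((volume W).toReal : ℂ) * c γ * ψ (y - (γ : EuclideanSpace ℝ (Fin n)))‖₊ : ℝ≥0∞) ≠ ⊤ := by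
    refine ne_top_of_le_ne_top ?_ (ENNReal.tsum_le_tsum hA)
    rw [ENNReal.tsum_mul_left]
    exact ENNReal.mul_ne_top ENNReal.ofReal_ne_top
      (ne_top_of_le_ne_top hsplit_fin (htile_sum _))
  have hsummable : Summable fun γ : ↥Γ =>
      ‖((volume W).toReal : ℂ) * c γ * ψ (y - (γ : EuclideanSpace ℝ (Fin n)))‖ := by
    have := ENNReal.summable_toReal hAsum
    simpa using this
  refine ⟨hsummable, ?_⟩
  -- summability of tile integrals
  have hB : ∀ γ : ↥Γ, (‖∫ z in T γ, c γ * ψ (y - z)‖₊ : ℝ≥0∞) ≤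
      ENNReal.ofReal M * ∫⁻ z in T γ, (‖ψ (y - z)‖₊ : ℝ≥0∞) := by
    intro γ
    refine le_trans (enorm_integral_le_lintegral_enorm _) ?_
    rw [← lintegral_const_mul' _ _ ENNReal.ofReal_ne_top]
    refine lintegral_mono fun z => ?_
    rw [enorm_eq_nnnorm, nnnorm_mul, ENNReal.coe_mul]
    exact mul_le_mul_left (hcM γ) _
  have hBsum : ∑' γ : ↥Γ, (‖∫ z in T γ, c γ * ψ (y - z)‖₊ : ℝ≥0∞) ≠ ⊤ := by
    refine ne_top_of_le_ne_top ?_ (ENNReal.tsum_le_tsum hB)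
    rw [ENNReal.tsum_mul_left]
    exact ENNReal.mul_ne_top ENNReal.ofReal_ne_top
      (ne_top_of_le_ne_top hψlint (htile_sum _))
  have hBsummable : Summable fun γ : ↥Γ => ‖∫ z in T γ, c γ * ψ (y - z)‖ := by
    have := ENNReal.summable_toReal hBsum
    simpa using this
  -- final calculation
  have hsa : Summable fun γ : ↥Γ =>
      ((volume W).toReal : ℂ) * c γ * ψ (y - (γ : EuclideanSpace ℝ (Fin n))) :=
    hsummable.of_norm
  have hsb : Summable fun γ : ↥Γ => ∫ z in T γ, c γ * ψ (y - z) := hBsummable.of_norm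
  have hdiffsummable : Summable fun γ : ↥Γ =>
      ‖(((volume W).toReal : ℂ) * c γ * ψ (y - (γ : EuclideanSpace ℝ (Fin n)))) -
        ∫ z in T γ, c γ * ψ (y - z)‖ := by
    refine Summable.of_nonneg_of_le (fun _ => norm_nonneg _)
      (fun γ => norm_sub_le _ _) (hsummable.add hBsummable)
  rw [hBsplit, ← Summable.tsum_sub hsa hsb]
  calc ENNReal.ofReal ‖∑' γ : ↥Γ,
        ((((volume W).toReal : ℂ) * c γ * ψ (y - (γ : EuclideanSpace ℝ (Fin n)))) -
          ∫ z in T γ, c γ * ψ (y - z))‖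
      ≤ ENNReal.ofReal (∑' γ : ↥Γ,
        ‖(((volume W).toReal : ℂ) * c γ * ψ (y - (γ : EuclideanSpace ℝ (Fin n)))) -
          ∫ z in T γ, c γ * ψ (y - z)‖) :=
        ENNReal.ofReal_le_ofReal (norm_tsum_le_tsum_norm hdiffsummable)
    _ = ∑' γ : ↥Γ, ENNReal.ofReal
        ‖(((volume W).toReal : ℂ) * c γ * ψ (y - (γ : EuclideanSpace ℝ (Fin n)))) -
          ∫ z in T γ, c γ * ψ (y - z)‖ :=
        ENNReal.ofReal_tsum_of_nonneg (fun _ => norm_nonneg _) hdiffsummable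
    _ ≤ ∑' γ : ↥Γ, ∫⁻ z in T γ, (‖h z‖₊ : ℝ≥0∞) * Ω (y - z) := by
        refine ENNReal.tsum_le_tsum fun γ => ?_
        rw [ofReal_norm]
        exact hK γ
    _ ≤ ∫⁻ z, (‖h z‖₊ : ℝ≥0∞) * Ω (y - z) := htile_sum _
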